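/- Let f : F_2^n → F_2 with ANF f(x) = ⊕_{u ⪯ x} a_u, let w ∈ F_2^n be nonzero, and define the integer-valued distance expansion d(f, l_w) = 2^{n−1} + Σ_{∅ ≠ I} λ_I^w ∏_{u∈I} a_u where λ_I^w equals λ_I = (−2)^{|I|−1} 2^{n − wt(v_I)} if w ⪯ v_I and wt(w) is even, equals −λ_I if w ⪯ v_I and wt(w) is odd, and 0 if w ⋠ v_I, with v_I = ∨_{u∈I} u. Then this expansion equals the Hamming distance d(f, l_w) for every f. -/

import Mathlib

open Finset

abbrev supp {n : ℕ} (x : Fin n → ZMod 2) : Finset (Fin n) := univ.filter (fun i => x i ≠ 0)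
abbrev wt {n : ℕ} (x : Fin n → ZMod 2) : ℕ := (supp x).card

lemma zmod2_eq_one (b : ZMod 2) : b ≠ 0 → b = 1 := by revert b; decide

def chi (b : ZMod 2) : ℤ := if b = 0 then 1 else -1

lemma chi_add (x y : ZMod 2) : chi (x + y) = chi x * chi y := by revert x y; decide
lemma chi_val (b : ZMod 2) : chi b = 1 - 2 * (b.val : ℤ) := by revert b; decide

lemma chi_sum {α : Type*} (s : Finset α) (g : α → ZMod 2) :
    chi (∑ i ∈ s, g i) = ∏ i ∈ s, chi (g i) := by
  classical
  induction s using Finset.cons_induction with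
  | empty => simp [chi]
  | cons a s ha ih => rw [Finset.sum_cons, Finset.prod_cons, chi_add, ih]

lemma sumT {n : ℕ} (w : Fin n → ZMod 2) (T : Finset (Fin n)) :
    ∑ x ∈ univ.filter (fun x : Fin n → ZMod 2 => T ⊆ univ.filter (fun i => x i ≠ 0)),
        chi (∑ i, w i * x i)
      = if univ.filter (fun i => w i ≠ 0) ⊆ T then chi (∑ i, w i) * 2 ^ (n - T.card) else 0 := by
  classical
  set t : Fin n → Finset (ZMod 2) := fun i => if i ∈ T then {1} else univ with ht
  have hset : univ.filter (fun x : Fin n → ZMod 2 => T ⊆ univ.filter (fun i => x i ≠ 0))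
      = Fintype.piFinset t := by
    ext x
    simp only [Fintype.mem_piFinset, mem_filter, mem_univ, true_and, Finset.subset_iff, ht]
    constructor
    · intro h i
      by_cases hi : i ∈ T
      · have := h hi
        change x i ≠ 0 at this
        simp only [hi, if_pos, mem_singleton]
        exact zmod2_eq_one _ this
      · simp [hi]
    · intro h i hi
      have := h i
      simp only [hi, if_pos, mem_singleton] at this
      simp [this]
  rw [hset]
  have hstep : ∑ x ∈ Fintype.piFinset t, chi (∑ i, w i * x i)
      = ∏ i, ∑ j ∈ t i, chi (w i * j) := by
    rw [Finset.prod_univ_sum]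
    exact Finset.sum_congr rfl fun x _ => chi_sum _ _
  rw [hstep]
  by_cases hsub : univ.filter (fun i => w i ≠ 0) ⊆ T
  · rw [if_pos hsub]
    have hTsub : T ⊆ (univ : Finset (Fin n)) := subset_univ T
    rw [← Finset.prod_sdiff hTsub]
    have h1 : ∏ i ∈ T, ∑ j ∈ t i, chi (w i * j) = ∏ i ∈ T, chi (w i) := by
      refine Finset.prod_congr rfl fun i hi => ?_
      simp [ht, hi]
    have h2 : ∏ i ∈ univ \ T, ∑ j ∈ t i, chi (w i * j) = 2 ^ (n - T.card) := by
      rw [Finset.prod_congr rfl (fun i hi => ?_), Finset.prod_const]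
      · congr 1
        rw [Finset.card_sdiff_of_subset hTsub, card_univ]; simp
      · simp only [mem_sdiff, mem_univ, true_and] at hi
        have hw0 : w i = 0 := by
          by_contra hne
          exact hi (hsub (by simp [hne]))
        simp [ht, hi, hw0]
        decide
    rw [h1, h2, mul_comm]
    congr 1
    rw [chi_sum]
    refine Finset.prod_subset hTsub fun i _ hiT => ?_
    have hw0 : w i = 0 := by
      by_contra hne
      exact hiT (hsub (by simp [hne]))
    simp [chi, hw0]
  · rw [if_neg hsub]
    obtain ⟨i, hiw, hiT⟩ : ∃ i, w i ≠ 0 ∧ i ∉ T := by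
      simpa [Finset.subset_iff] using hsub
    refine Finset.prod_eq_zero (mem_univ i) ?_
    have hw1 : w i = 1 := zmod2_eq_one _ hiw
    simp [ht, hiT, hw1, chi]
    decide

theorem stmt16 {n : ℕ} (f a : (Fin n → ZMod 2) → ZMod 2)
    (hf : ∀ x, f x = ∑ u ∈ univ.filter (fun u : Fin n → ZMod 2 => supp u ⊆ supp x), a u)
    (w : Fin n → ZMod 2) (hw : w ≠ 0) :
    ((univ.filter (fun x : Fin n → ZMod 2 => f x ≠ ∑ i, w i * x i)).card : ℤ)
      = 2 ^ (n - 1) + ∑ I ∈ (univ : Finset (Fin n → ZMod 2)).powerset.filter (fun I => I ≠ ∅),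
          (if supp w ⊆ I.biUnion supp then
              (if Even (wt w) then (-2 : ℤ) ^ (I.card - 1) * 2 ^ (n - (I.biUnion supp).card)
               else -((-2 : ℤ) ^ (I.card - 1) * 2 ^ (n - (I.biUnion supp).card)))
            else 0) * ∏ u ∈ I, ((a u).val : ℤ) := by
  classical
  obtain ⟨i0, hi0⟩ : ∃ i, w i ≠ 0 := by
    by_contra h; push_neg at h; exact hw (funext h)
  have hn : 1 ≤ n := i0.pos
  have hsw : ¬ (supp w ⊆ (∅ : Finset (Fin n))) := by
    intro h
    have := h (mem_filter.mpr ⟨mem_univ i0, hi0⟩)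
    simp at this
  set l : (Fin n → ZMod 2) → ZMod 2 := fun x => ∑ i, w i * x i with hl
  -- Step A : counting
  have hA : 2 * ((univ.filter (fun x : Fin n → ZMod 2 => f x ≠ l x)).card : ℤ)
      = 2 ^ n - ∑ x : Fin n → ZMod 2, chi (f x + l x) := by
    have key : ∀ x : Fin n → ZMod 2, chi (f x + l x)
        = 1 - 2 * (if f x ≠ l x then 1 else 0) := by
      intro x
      by_cases h : f x = l x
      · simp [chi, h, CharTwo.add_self_eq_zero]
      · have h0 : f x + l x ≠ 0 := by
          intro h0
          rw [CharTwo.add_eq_iff_eq_add, zero_add] at h0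
          exact h h0
        simp [chi, h0, h]
    rw [Finset.sum_congr rfl (fun x _ => key x), Finset.sum_sub_distrib,
      ← Finset.mul_sum, Finset.sum_boole, Finset.sum_const, card_univ]
    simp only [Fintype.card_fun, Fintype.card_fin, ZMod.card, nsmul_eq_mul, mul_one]
    push_cast
    ring
  -- Step B : ANF expansion of chi (f x)
  have hB : ∀ x : Fin n → ZMod 2, chi (f x) =
      ∑ I ∈ (univ.filter (fun u : Fin n → ZMod 2 => supp u ⊆ supp x)).powerset,
        (-2 : ℤ) ^ I.card * ∏ u ∈ I, ((a u).val : ℤ) := by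
    intro x
    rw [hf x, chi_sum]
    have hval : ∀ u : Fin n → ZMod 2, chi (a u) = (-2) * ((a u).val : ℤ) + 1 := by
      intro u; rw [chi_val]; ring
    rw [Finset.prod_congr rfl fun u _ => hval u, Finset.prod_add]
    refine Finset.sum_congr rfl fun I _ => ?_
    rw [Finset.prod_const_one, mul_one, Finset.prod_mul_distrib, Finset.prod_const]
  -- Step C : swap and evaluate
  have hC : ∑ x : Fin n → ZMod 2, chi (f x + l x)
      = ∑ I ∈ (univ : Finset (Fin n → ZMod 2)).powerset,
          ((-2 : ℤ) ^ I.card * ∏ u ∈ I, ((a u).val : ℤ)) *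
            (if supp w ⊆ I.biUnion supp then chi (∑ i, w i) * 2 ^ (n - (I.biUnion supp).card)
             else 0) := by
    have key : ∀ x : Fin n → ZMod 2, chi (f x + l x)
        = ∑ I ∈ (univ : Finset (Fin n → ZMod 2)).powerset,
            (if I.biUnion supp ⊆ supp x then
              ((-2 : ℤ) ^ I.card * ∏ u ∈ I, ((a u).val : ℤ)) * chi (l x) else 0) := by
      intro x
      rw [chi_add, hB x, Finset.sum_mul, ← Finset.sum_filter]
      refine Finset.sum_congr ?_ fun I _ => rfl
      ext I
      simp only [Finset.mem_powerset, Finset.mem_filter, Finset.mem_powerset,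
        Finset.biUnion_subset, Finset.subset_iff, mem_filter, mem_univ, true_and,
        Finset.mem_biUnion]
      constructor
      · rintro h
        refine ⟨fun u hu => trivial, fun i hi => ?_⟩
        obtain ⟨u, hu, hiu⟩ := hi
        exact h hu (by simpa using hiu)
      · rintro ⟨-, h⟩ u hu i hi
        exact h ⟨u, hu, by simp [hi]⟩
    rw [Finset.sum_congr rfl (fun x _ => key x), Finset.sum_comm]
    refine Finset.sum_congr rfl fun I _ => ?_
    rw [← Finset.sum_filter, ← Finset.mul_sum]
    congr 1
    exact sumT w (I.biUnion supp)
  -- parity of chi (∑ i, w i)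
  have hpar : chi (∑ i, w i) = if Even (wt w) then 1 else -1 := by
    have h1 : ∑ i, w i = ∑ i ∈ supp w, w i :=
      (Finset.sum_subset (subset_univ _) (fun i _ hi => by simpa using hi)).symm
    have h2 : ∑ i ∈ supp w, w i = ((wt w : ℕ) : ZMod 2) := by
      rw [Finset.sum_congr rfl (fun i hi => zmod2_eq_one (w i) (by simpa using hi))]
      simp [wt]
    rw [h1, h2, chi]
    have : ((wt w : ℕ) : ZMod 2) = 0 ↔ Even (wt w) := by
      rw [ZMod.natCast_eq_zero_iff, ← even_iff_two_dvd]
    by_cases he : Even (wt w)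
    · rw [if_pos (this.mpr he), if_pos he]
    · rw [if_neg (fun h => he (this.mp h)), if_neg he]
  -- assemble
  apply mul_left_cancel₀ (two_ne_zero : (2 : ℤ) ≠ 0)
  rw [hA, hC]
  rw [← Finset.sum_filter_add_sum_filter_not ((univ : Finset (Fin n → ZMod 2)).powerset)
    (fun I => I ≠ ∅)]
  have hempt : (univ : Finset (Fin n → ZMod 2)).powerset.filter (fun I => ¬ I ≠ ∅) = {∅} := by
    ext I; simp
  rw [hempt, Finset.sum_singleton]
  simp only [Finset.biUnion_empty, if_neg hsw, hsw, ↓reduceIte, mul_zero, add_zero]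
  rw [mul_add, Finset.mul_sum]
  have h2n : (2 : ℤ) * 2 ^ (n - 1) = 2 ^ n := by
    rw [← pow_succ']
    congr 1
    omega
  rw [h2n]
  have hterm : ∀ I ∈ (univ : Finset (Fin n → ZMod 2)).powerset.filter (fun I => I ≠ ∅),
      ((-2 : ℤ) ^ I.card * ∏ u ∈ I, ((a u).val : ℤ)) *
        (if supp w ⊆ I.biUnion supp then chi (∑ i, w i) * 2 ^ (n - (I.biUnion supp).card) else 0)
      = -(2 * ((if supp w ⊆ I.biUnion supp then
              (if Even (wt w) then (-2 : ℤ) ^ (I.card - 1) * 2 ^ (n - (I.biUnion supp).card)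
               else -((-2 : ℤ) ^ (I.card - 1) * 2 ^ (n - (I.biUnion supp).card)))
            else 0) * ∏ u ∈ I, ((a u).val : ℤ))) := by
    intro I hI
    simp only [Finset.mem_filter, Finset.mem_powerset] at hI
    have hc : 1 ≤ I.card := Finset.card_pos.mpr (Finset.nonempty_iff_ne_empty.mpr hI.2)
    have hpow : (-2 : ℤ) ^ I.card = -2 * (-2 : ℤ) ^ (I.card - 1) := by
      conv_lhs => rw [show I.card = (I.card - 1) + 1 from (Nat.succ_pred_eq_of_pos hc).symm]
      rw [pow_succ']
    rw [hpar]
    by_cases hcond : supp w ⊆ I.biUnion supp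
    · rw [if_pos hcond, if_pos hcond]
      by_cases he : Even (wt w)
      · rw [if_pos he, if_pos he, hpow]; ring
      · rw [if_neg he, if_neg he, hpow]; ring
    · rw [if_neg hcond, if_neg hcond]; ring
  rw [Finset.sum_congr rfl hterm, Finset.sum_neg_distrib]
  ring
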